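/- For A ≠ 0, q > -1, k₀ ≠ 0, the monomial uₙ(x) = (A x^q D⁻¹ + k₀)ⁿ 1 satisfies uₙ(x) = [Γ(1/(1+q)) n! / Γ(n + 1/(1+q))] k₀ⁿ Lₙ^{(α)}(z), where α = -q/(q+1), z = -A x^{q+1}/(k₀(q+1)), and Lₙ^{(α)} is the generalized Laguerre polynomial Lₙ^{(α)}(z) = Σ_{j=0}^n binom(n+α, n-j) (-z)^j / j!. -/

import Mathlib

open intervalIntegral Finset

noncomputable def Mop (A q k₀ : ℝ) (f : ℝ → ℝ) : ℝ → ℝ :=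
  fun x => A * x ^ q * (∫ t in (0 : ℝ)..x, f t) + k₀ * f x

/-- The generalized Laguerre polynomial
`Lₙ^{(α)}(z) = Σ_{j=0}^n binom(n+α, n-j) (-z)^j / j!` with
`binom(n+α, n-j) = Γ(n+α+1)/(Γ(j+α+1)(n-j)!)`. -/
noncomputable def genLaguerre (n : ℕ) (α z : ℝ) : ℝ :=
  ∑ j ∈ Finset.range (n + 1),
    (-1 : ℝ) ^ j * (Real.Gamma ((n : ℝ) + α + 1) /
      (Real.Gamma ((j : ℝ) + α + 1) * ((n - j).factorial : ℝ))) * z ^ j /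
      (j.factorial : ℝ)

noncomputable def Pq (q : ℝ) (j : ℕ) : ℝ := ∏ i ∈ Finset.range j, ((q + 1) * i + 1)

lemma Pq_zero (q : ℝ) : Pq q 0 = 1 := by simp [Pq]

lemma Pq_succ (q : ℝ) (j : ℕ) : Pq q (j + 1) = Pq q j * ((q + 1) * j + 1) := by
  simp [Pq, Finset.prod_range_succ]

lemma Pq_pos {q : ℝ} (hq : -1 < q) (j : ℕ) : 0 < Pq q j := by
  apply Finset.prod_pos
  intro i _
  have h1 : (0:ℝ) ≤ (q + 1) * i := mul_nonneg (by linarith) (Nat.cast_nonneg i)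
  linarith

lemma gamma_Pq {q : ℝ} (hq : -1 < q) (j : ℕ) :
    Real.Gamma ((j : ℝ) + 1 / (q + 1)) * (q + 1) ^ j =
      Real.Gamma (1 / (q + 1)) * Pq q j := by
  induction j with
  | zero => simp [Pq_zero]
  | succ j ih =>
    have hq1 : (0:ℝ) < q + 1 := by linarith
    have hβ : (0:ℝ) < 1 / (q + 1) := by positivity
    have hne : ((j : ℝ) + 1 / (q + 1)) ≠ 0 := by positivity
    have hc : ((j + 1 : ℕ) : ℝ) + 1 / (q + 1) = ((j : ℝ) + 1 / (q + 1)) + 1 := by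
      push_cast; ring
    rw [hc, Real.Gamma_add_one hne, Pq_succ, pow_succ]
    have h1 : ((j : ℝ) + 1 / (q + 1)) * (q + 1) = (q + 1) * j + 1 := by
      field_simp
    calc ((j : ℝ) + 1 / (q + 1)) * Real.Gamma ((j : ℝ) + 1 / (q + 1)) * ((q + 1) ^ j * (q + 1))
        = (((j : ℝ) + 1 / (q + 1)) * (q + 1)) * (Real.Gamma ((j : ℝ) + 1 / (q + 1)) * (q + 1) ^ j) := by
          ring
      _ = ((q + 1) * j + 1) * (Real.Gamma (1 / (q + 1)) * Pq q j) := by rw [h1, ih]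
      _ = Real.Gamma (1 / (q + 1)) * (Pq q j * ((q + 1) * j + 1)) := by ring

lemma key (A q k₀ : ℝ) (hq : -1 < q) :
    ∀ n : ℕ, ∀ x : ℝ, 0 < x →
      ((Mop A q k₀)^[n] (fun _ => 1)) x =
        ∑ j ∈ Finset.range (n + 1),
          (n.choose j : ℝ) / Pq q j * A ^ j * x ^ ((q + 1) * (j : ℝ)) * k₀ ^ (n - j) := by
  intro n
  induction n with
  | zero =>
    intro x hx
    simp [Pq_zero]
  | succ n ih =>
    intro x hx
    have hq1 : (0:ℝ) < q + 1 := by linarith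
    have hr : ∀ j : ℕ, (0:ℝ) ≤ (q + 1) * j := fun j => mul_nonneg (by linarith) (Nat.cast_nonneg j)
    have hrpos : ∀ j : ℕ, (0:ℝ) < (q + 1) * j + 1 := fun j => by have := hr j; linarith
    have hint : ∀ j : ℕ, (∫ t in (0:ℝ)..x, t ^ ((q + 1) * (j : ℝ)))
        = x ^ ((q + 1) * (j : ℝ) + 1) / ((q + 1) * j + 1) := by
      intro j
      rw [integral_rpow (Or.inl (by have := hr j; linarith)),
        Real.zero_rpow (ne_of_gt (hrpos j))]
      ring
    have hIcong : (∫ t in (0:ℝ)..x, ((Mop A q k₀)^[n] (fun _ => 1)) t)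
        = ∑ j ∈ Finset.range (n + 1),
            ((n.choose j : ℝ) / Pq q j * A ^ j * k₀ ^ (n - j)) *
              (x ^ ((q + 1) * (j : ℝ) + 1) / ((q + 1) * j + 1)) := by
      rw [intervalIntegral.integral_congr_ae
          (g := fun t => ∑ j ∈ Finset.range (n + 1),
            ((n.choose j : ℝ) / Pq q j * A ^ j * k₀ ^ (n - j)) * t ^ ((q + 1) * (j : ℝ)))
          ?_]
      · rw [intervalIntegral.integral_finset_sum (fun j _ =>
          (intervalIntegral.intervalIntegrable_rpow (Or.inl (hr j))).const_mul _)]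
        refine Finset.sum_congr rfl fun j _ => ?_
        rw [intervalIntegral.integral_const_mul, hint j]
      · refine Filter.Eventually.of_forall fun t ht => ?_
        have ht0 : 0 < t := by
          rw [Set.uIoc_of_le hx.le] at ht
          exact ht.1
        rw [ih t ht0]
        refine Finset.sum_congr rfl fun j _ => ?_
        ring
    rw [Function.iterate_succ_apply']
    show A * x ^ q * (∫ t in (0:ℝ)..x, ((Mop A q k₀)^[n] (fun _ => 1)) t)
        + k₀ * ((Mop A q k₀)^[n] (fun _ => 1)) x = _
    rw [hIcong, ih x hx, Finset.mul_sum, Finset.mul_sum]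
    have h1 : ∑ j ∈ Finset.range (n + 1), A * x ^ q *
          (((n.choose j : ℝ) / Pq q j * A ^ j * k₀ ^ (n - j)) *
            (x ^ ((q + 1) * (j : ℝ) + 1) / ((q + 1) * j + 1)))
        = ∑ j ∈ Finset.range (n + 1),
          (n.choose j : ℝ) / Pq q (j + 1) * A ^ (j + 1) * x ^ ((q + 1) * ((j : ℝ) + 1)) *
            k₀ ^ (n - j) := by
      refine Finset.sum_congr rfl fun j _ => ?_
      have hxsplit : x ^ (q + ((q + 1) * (j : ℝ) + 1)) = x ^ q * x ^ ((q + 1) * (j : ℝ) + 1) :=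
        Real.rpow_add hx _ _
      rw [Pq_succ, show (q + 1) * ((j : ℝ) + 1) = q + ((q + 1) * (j : ℝ) + 1) by ring, hxsplit]
      have h2 := ne_of_gt (Pq_pos hq j)
      have h3 := ne_of_gt (hrpos j)
      generalize x ^ q = Xq
      generalize x ^ ((q + 1) * (j : ℝ) + 1) = X1
      field_simp
      ring
    rw [h1]
    rw [Finset.sum_range_succ' (fun j => ((n + 1).choose j : ℝ) / Pq q j * A ^ j *
      x ^ ((q + 1) * (j : ℝ)) * k₀ ^ (n + 1 - j)) (n + 1)]
    have h4 : ∀ j ∈ Finset.range (n + 1),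
        (((n + 1).choose (j + 1) : ℝ) / Pq q (j + 1) * A ^ (j + 1) *
          x ^ ((q + 1) * ((j + 1 : ℕ) : ℝ)) * k₀ ^ (n + 1 - (j + 1)))
        = (n.choose j : ℝ) / Pq q (j + 1) * A ^ (j + 1) * x ^ ((q + 1) * ((j : ℝ) + 1)) *
            k₀ ^ (n - j)
          + (n.choose (j + 1) : ℝ) / Pq q (j + 1) * A ^ (j + 1) *
            x ^ ((q + 1) * ((j : ℝ) + 1)) * k₀ ^ (n - j) := by
      intro j _
      rw [Nat.choose_succ_succ, Nat.succ_sub_succ]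
      push_cast
      ring
    rw [Finset.sum_congr rfl h4, Finset.sum_add_distrib]
    have h5 : ∑ j ∈ Finset.range (n + 1), k₀ *
          ((n.choose j : ℝ) / Pq q j * A ^ j * x ^ ((q + 1) * (j : ℝ)) * k₀ ^ (n - j))
        = (∑ j ∈ Finset.range (n + 1),
            (n.choose (j + 1) : ℝ) / Pq q (j + 1) * A ^ (j + 1) *
              x ^ ((q + 1) * ((j : ℝ) + 1)) * k₀ ^ (n - j))
          + ((n + 1).choose 0 : ℝ) / Pq q 0 * A ^ 0 * x ^ ((q + 1) * ((0 : ℕ) : ℝ)) *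
              k₀ ^ (n + 1 - 0) := by
      rw [Finset.sum_range_succ' (fun j => k₀ *
        ((n.choose j : ℝ) / Pq q j * A ^ j * x ^ ((q + 1) * (j : ℝ)) * k₀ ^ (n - j))) n]
      rw [Finset.sum_range_succ (fun j => (n.choose (j + 1) : ℝ) / Pq q (j + 1) * A ^ (j + 1) *
        x ^ ((q + 1) * ((j : ℝ) + 1)) * k₀ ^ (n - j)) n]
      have e0 : (n.choose (n + 1) : ℝ) = 0 := by
        rw [Nat.choose_succ_self]; norm_num
      rw [e0]
      simp only [Pq_zero, Nat.choose_zero_right, Nat.cast_zero, mul_zero, Real.rpow_zero,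
        Nat.cast_one, pow_zero, Nat.sub_zero, Nat.choose_zero_right]
      have hmatch : ∀ j ∈ Finset.range n, k₀ *
            ((n.choose (j + 1) : ℝ) / Pq q (j + 1) * A ^ (j + 1) *
              x ^ ((q + 1) * ((j + 1 : ℕ) : ℝ)) * k₀ ^ (n - (j + 1)))
          = (n.choose (j + 1) : ℝ) / Pq q (j + 1) * A ^ (j + 1) *
              x ^ ((q + 1) * ((j : ℝ) + 1)) * k₀ ^ (n - j) := by
        intro j hj
        have hj' : j < n := Finset.mem_range.mp hj
        have hsub : n - j = (n - (j + 1)) + 1 := by omega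
        rw [hsub, pow_succ]
        push_cast
        ring
      rw [Finset.sum_congr rfl hmatch]
      ring
    rw [h5]
    push_cast
    ring

/-- `uₙ(x) = [Γ(1/(1+q)) n! / Γ(n+1/(1+q))] k₀ⁿ Lₙ^{(α)}(z)` with
`α = -q/(q+1)`, `z = -A x^{q+1}/(k₀(q+1))`. -/
theorem stmt7 (A q k₀ : ℝ) (hA : A ≠ 0) (hq : -1 < q) (hk : k₀ ≠ 0)
    (n : ℕ) (x : ℝ) (hx : 0 < x) :
    ((Mop A q k₀)^[n] (fun _ => 1)) x =
      Real.Gamma (1 / (1 + q)) * (n.factorial : ℝ) /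
          Real.Gamma ((n : ℝ) + 1 / (1 + q)) * k₀ ^ n *
        genLaguerre n (-q / (q + 1)) (-A * x ^ (q + 1) / (k₀ * (q + 1))) := by
  have hq1 : (0:ℝ) < q + 1 := by linarith
  have hβ : (0:ℝ) < 1 / (q + 1) := by positivity
  rw [key A q k₀ hq n x hx, genLaguerre, Finset.mul_sum]
  refine Finset.sum_congr rfl fun j hj => ?_
  have hjn : j ≤ n := Nat.lt_succ_iff.mp (Finset.mem_range.mp hj)
  have h1q : 1 / (1 + q) = 1 / (q + 1) := by rw [add_comm]
  have hαn : (n : ℝ) + -q / (q + 1) + 1 = (n : ℝ) + 1 / (q + 1) := by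
    field_simp
    ring
  have hαj : (j : ℝ) + -q / (q + 1) + 1 = (j : ℝ) + 1 / (q + 1) := by
    field_simp
    ring
  rw [h1q, hαn, hαj]
  have hΓn : Real.Gamma ((n : ℝ) + 1 / (q + 1)) ≠ 0 :=
    ne_of_gt (Real.Gamma_pos_of_pos (by positivity))
  have hΓβ : Real.Gamma (1 / (q + 1)) ≠ 0 :=
    ne_of_gt (Real.Gamma_pos_of_pos hβ)
  have hΓj : Real.Gamma ((j : ℝ) + 1 / (q + 1))
      = Real.Gamma (1 / (q + 1)) * Pq q j / (q + 1) ^ j := by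
    rw [eq_div_iff (pow_ne_zero j (ne_of_gt hq1))]
    exact gamma_Pq hq j
  have hxp : (x ^ (q + 1)) ^ j = x ^ ((q + 1) * (j : ℝ)) := by
    rw [Real.rpow_mul hx.le, Real.rpow_natCast]
  have hzz : ∀ w : ℝ, (-1 : ℝ) ^ j * w * (-A * x ^ (q + 1) / (k₀ * (q + 1))) ^ j
      = w * (A * x ^ (q + 1) / (k₀ * (q + 1))) ^ j := by
    intro w
    have hm1 : ((-1 : ℝ)) ^ j * (-1 : ℝ) ^ j = 1 := by rw [← mul_pow]; norm_num
    rw [show -A * x ^ (q + 1) / (k₀ * (q + 1)) = -(A * x ^ (q + 1) / (k₀ * (q + 1))) by ring,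
      neg_pow]
    linear_combination w * (A * x ^ (q + 1) / (k₀ * (q + 1))) ^ j * hm1
  rw [hzz]
  have hpos : (A * x ^ (q + 1) / (k₀ * (q + 1))) ^ j
      = A ^ j * x ^ ((q + 1) * (j : ℝ)) / (k₀ ^ j * (q + 1) ^ j) := by
    rw [div_pow, mul_pow, mul_pow, hxp]
  have hkpow : k₀ ^ (n - j) * k₀ ^ j = k₀ ^ n := pow_sub_mul_pow k₀ hjn
  have hfj : ((j.factorial : ℝ)) ≠ 0 := Nat.cast_ne_zero.mpr j.factorial_ne_zero
  have hfnj : (((n - j).factorial : ℝ)) ≠ 0 := Nat.cast_ne_zero.mpr (n - j).factorial_ne_zero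
  have hP : Pq q j ≠ 0 := ne_of_gt (Pq_pos hq j)
  rw [hpos, hΓj, Nat.cast_choose ℝ hjn, ← hkpow]
  generalize x ^ ((q + 1) * (j : ℝ)) = X
  field_simp
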